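/- Let J : ℝ^M × ℝˡ → ℝ be C¹, and suppose for each p the function u ↦ J(u,p) + U(u) (with U proper convex lsc) has unique minimizer ū(p), and that p ↦ J̄(p) := min_u J(u,p) + U(u) is differentiable. If ū is continuous at p₀, then ∇_p J̄(p₀) = ∇_p J(ū(p₀), p₀) (partial derivative of J with respect to p evaluated at the optimal u). -/

import Mathlib

/-- Danskin/envelope theorem: the gradient of the optimal value function equals the
partial gradient of the cost at the optimizer. -/
theorem stmt_13 (M l : ℕ)
    (J : EuclideanSpace ℝ (Fin M) → EuclideanSpace ℝ (Fin l) → ℝ)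
    (hJ : ContDiff ℝ 1 (fun up : EuclideanSpace ℝ (Fin M) × EuclideanSpace ℝ (Fin l) =>
      J up.1 up.2))
    (U : EuclideanSpace ℝ (Fin M) → EReal)
    (hUconv : ∀ x y : EuclideanSpace ℝ (Fin M), ∀ a b : ℝ, 0 ≤ a → 0 ≤ b → a + b = 1 →
      U (a • x + b • y) ≤ (a : EReal) * U x + (b : EReal) * U y)
    (hUbot : ∀ x, U x ≠ ⊥) (hUtop : ∃ x, U x ≠ ⊤)
    (hUlsc : LowerSemicontinuous U)
    (ubar : EuclideanSpace ℝ (Fin l) → EuclideanSpace ℝ (Fin M))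
    (hmin : ∀ p y, (J (ubar p) p : EReal) + U (ubar p) ≤ (J y p : EReal) + U y)
    (huniq : ∀ p u, (∀ y, (J u p : EReal) + U u ≤ (J y p : EReal) + U y) → u = ubar p)
    (Jbar : EuclideanSpace ℝ (Fin l) → ℝ)
    (hJbar : ∀ p, ((Jbar p : ℝ) : EReal) = (J (ubar p) p : EReal) + U (ubar p))
    (p₀ : EuclideanSpace ℝ (Fin l))
    (hdiff : DifferentiableAt ℝ Jbar p₀) (hcont : ContinuousAt ubar p₀) :
    gradient Jbar p₀ = gradient (fun p => J (ubar p₀) p) p₀ := by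
  set u₀ := ubar p₀ with hu₀
  -- U (ubar p) is finite, with explicit real value
  have hfin : ∀ p, U (ubar p) = ((Jbar p - J (ubar p) p : ℝ) : EReal) := by
    intro p
    have h := hJbar p
    have htop : U (ubar p) ≠ ⊤ := by
      intro hT
      rw [hT] at h
      simp at h
    obtain ⟨c, hc⟩ : ∃ c : ℝ, U (ubar p) = (c : EReal) :=
      ⟨(U (ubar p)).toReal, (EReal.coe_toReal htop (hUbot _)).symm⟩
    rw [hc] at h ⊢
    rw [← EReal.coe_add] at h
    have : Jbar p = J (ubar p) p + c := by exact_mod_cast h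
    norm_num [this]
  set c₀ : ℝ := Jbar p₀ - J u₀ p₀ with hc₀
  -- key inequality
  have hkey : ∀ p, Jbar p ≤ J u₀ p + c₀ := by
    intro p
    have h := hmin p u₀
    rw [hfin p, hu₀, hfin p₀] at h
    rw [← EReal.coe_add, ← EReal.coe_add] at h
    have h' : J (ubar p) p + (Jbar p - J (ubar p) p)
        ≤ J (ubar p₀) p + (Jbar p₀ - J (ubar p₀) p₀) := by exact_mod_cast h
    simp only [hc₀, hu₀]
    linarith
  -- differentiability of p ↦ J u₀ p
  have hg : Differentiable ℝ (fun p => J u₀ p) := by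
    have := (hJ.differentiable one_ne_zero).comp
      ((differentiable_const u₀).prodMk differentiable_id)
    exact this
  set f : EuclideanSpace ℝ (Fin l) → ℝ := fun p => J u₀ p + c₀ - Jbar p with hf
  have hfmin : IsLocalMin f p₀ := by
    apply Filter.Eventually.of_forall
    intro p
    have h1 := hkey p
    have h2 : f p₀ = 0 := by simp [hf, hc₀]
    have : 0 ≤ f p := by simp [hf]; linarith
    rw [h2]; exact this
  have hfd : HasFDerivAt f ((fderiv ℝ (fun p => J u₀ p) p₀) - fderiv ℝ Jbar p₀) p₀ := by
    exact (((hg p₀).hasFDerivAt.add_const c₀).sub hdiff.hasFDerivAt)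
  have hzero := hfmin.hasFDerivAt_eq_zero hfd
  have heq : fderiv ℝ Jbar p₀ = fderiv ℝ (fun p => J u₀ p) p₀ := by
    have := sub_eq_zero.mp hzero
    exact this.symm
  unfold gradient
  rw [heq]
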